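/- (Leftover hash lemma for the Toeplitz family.) Let m, n ≥ 1, let S ⊆ 𝔽₂ⁿ be nonempty, and let ε > 0. For (t, b) ∈ 𝔽₂^{m+n−1} × 𝔽₂ᵐ write c_{t,b}(S) = |{x ∈ S : h_{t,b}(x) = 0^m}|. Then the number of pairs (t, b) with |c_{t,b}(S) − |S|/2^m| ≥ ε·|S|/2^m is at most (2^m/(ε²·|S|)) · 2^{n+2m−1}; equivalently, Pr_{t,b}[ |c_{t,b}(S) − |S|/2^m| ≥ ε·|S|/2^m ] ≤ 2^m/(ε²·|S|) for uniformly random (t, b). -/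

import Mathlib

open Finset

/-- The `m × n` Toeplitz matrix over `𝔽₂` determined by the vector
`t ∈ 𝔽₂^{m+n-1}` recording its first row and first column:
entry `(i, j)` is `t (i + (n-1) - j)`, so that `a_{i,j} = a_{i+1,j+1}`. -/
def toeplitz (m n : ℕ) (t : Fin (m + n - 1) → ZMod 2) :
    Matrix (Fin m) (Fin n) (ZMod 2) :=
  Matrix.of fun i j => t ⟨i.val + (n - 1) - j.val, by
    have hi := i.isLt; have hj := j.isLt; omega⟩

/-- The Toeplitz hash function `h_{t,b}(x) = A_t x + b`. -/
def hashTB (m n : ℕ) (t : Fin (m + n - 1) → ZMod 2) (b : Fin m → ZMod 2)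
    (x : Fin n → ZMod 2) : Fin m → ZMod 2 :=
  (toeplitz m n t).mulVec x + b

/-- The matrix of the linear map `t ↦ A_t z`. -/
def tmat' (m n : ℕ) (hn : 1 ≤ n) (z : Fin n → ZMod 2) :
    Matrix (Fin m) (Fin (m + n - 1)) (ZMod 2) :=
  Matrix.of fun i k =>
    if h : i.val ≤ k.val ∧ k.val ≤ i.val + (n - 1) then
      z ⟨i.val + (n - 1) - k.val, by omega⟩ else 0

lemma tmat_mulVec (m n : ℕ) (hn : 1 ≤ n) (z : Fin n → ZMod 2)
    (t : Fin (m + n - 1) → ZMod 2) :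
    (toeplitz m n t).mulVec z = (tmat' m n hn z).mulVec t := by
  funext i
  have hi := i.isLt
  simp only [Matrix.mulVec, dotProduct, toeplitz, tmat', Matrix.of_apply]
  rw [← Finset.sum_filter_add_sum_filter_not Finset.univ
    (fun k : Fin (m + n - 1) => i.val ≤ k.val ∧ k.val ≤ i.val + (n - 1))]
  have h2 : ∀ k ∈ Finset.univ.filter
      (fun k : Fin (m + n - 1) => ¬(i.val ≤ k.val ∧ k.val ≤ i.val + (n - 1))),
      (if h : i.val ≤ k.val ∧ k.val ≤ i.val + (n - 1) then
        z ⟨i.val + (n - 1) - k.val, by omega⟩ else 0) * t k = 0 := by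
    intro k hk
    rw [Finset.mem_filter] at hk
    rw [dif_neg hk.2, zero_mul]
  rw [Finset.sum_eq_zero h2, add_zero]
  refine Finset.sum_nbij' (fun j : Fin n => (⟨i.val + (n - 1) - j.val, by
      have := j.isLt; omega⟩ : Fin (m + n - 1)))
    (fun k : Fin (m + n - 1) => (⟨min (i.val + (n - 1) - k.val) (n - 1), by omega⟩ : Fin n))
    ?_ ?_ ?_ ?_ ?_
  · intro j _
    simp only [Finset.mem_filter, Finset.mem_univ, true_and]
    have := j.isLt; omega
  · intro k hk
    exact Finset.mem_univ _
  · intro j _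
    have := j.isLt
    apply Fin.ext
    simp only []
    omega
  · intro k hk
    rw [Finset.mem_filter] at hk
    apply Fin.ext
    simp only []
    omega
  · intro j hj
    have hjlt := j.isLt
    have hcond : i.val ≤ i.val + (n-1) - j.val ∧ i.val + (n-1) - j.val ≤ i.val + (n-1) := by omega
    rw [dif_pos hcond]
    have : (⟨i.val + (n - 1) - (i.val + (n - 1) - j.val), by omega⟩ : Fin n) = j := by
      apply Fin.ext; simp only []; omega
    rw [this, mul_comm]

lemma tmat_rows_li (m n : ℕ) (hm : 1 ≤ m) (hn : 1 ≤ n) (z : Fin n → ZMod 2) (hz : z ≠ 0) :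
    LinearIndependent (ZMod 2) (fun i => tmat' m n hn z i) := by
  rw [Fintype.linearIndependent_iff]
  intro c hc
  by_contra hne
  push_neg at hne
  obtain ⟨i₁, hi₁⟩ := hne
  -- largest index with c ≠ 0
  set Ic : Finset (Fin m) := Finset.univ.filter (fun i => c i ≠ 0) with hIc
  have hIcne : Ic.Nonempty := ⟨i₁, by simp [hIc, hi₁]⟩
  set i₀ := Ic.max' hIcne with hi₀def
  have hci₀ : c i₀ ≠ 0 := by
    have := Ic.max'_mem hIcne
    simp [hIc] at this; exact this
  have hmax : ∀ i : Fin m, i₀ < i → c i = 0 := by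
    intro i hi
    by_contra h
    have : i ∈ Ic := by simp [hIc, h]
    exact absurd (Ic.le_max' i this) (not_le.mpr hi)
  -- smallest index with z ≠ 0
  have hzne : ∃ j, z j ≠ 0 := by
    by_contra h; push_neg at h; exact hz (funext fun j => h j)
  obtain ⟨j₁, hj₁⟩ := hzne
  set Jz : Finset (Fin n) := Finset.univ.filter (fun j => z j ≠ 0) with hJz
  have hJzne : Jz.Nonempty := ⟨j₁, by simp [hJz, hj₁]⟩
  set j₀ := Jz.min' hJzne with hj₀def
  have hzj₀ : z j₀ ≠ 0 := by
    have := Jz.min'_mem hJzne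
    simp [hJz] at this; exact this
  have hmin : ∀ j : Fin n, j < j₀ → z j = 0 := by
    intro j hj
    by_contra h
    have : j ∈ Jz := by simp [hJz, h]
    exact absurd (Jz.min'_le j this) (not_le.mpr hj)
  have hi₀lt := i₀.isLt
  have hj₀lt := j₀.isLt
  set k₀ : Fin (m + n - 1) := ⟨i₀.val + (n - 1) - j₀.val, by omega⟩ with hk₀
  have hk₀val : k₀.val = i₀.val + (n - 1) - j₀.val := rfl
  have hcol := congr_fun hc k₀
  rw [Finset.sum_apply, Pi.zero_apply] at hcol
  have hterm : ∀ i : Fin m, i ≠ i₀ → (c i • tmat' m n hn z i) k₀ = 0 := by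
    intro i hi
    rcases lt_or_gt_of_ne hi with hlt | hgt
    · -- i < i₀ : matrix entry is 0
      simp only [Pi.smul_apply, smul_eq_mul, tmat', Matrix.of_apply]
      by_cases hcond : i.val ≤ k₀.val ∧ k₀.val ≤ i.val + (n - 1)
      · rw [dif_pos hcond]
        have hilt : i.val < i₀.val := hlt
        have : (⟨i.val + (n - 1) - k₀.val, by omega⟩ : Fin n) < j₀ := by
          rw [Fin.lt_def]
          show i.val + (n - 1) - k₀.val < j₀.val
          omega
        rw [hmin _ this, mul_zero]
      · rw [dif_neg hcond, mul_zero]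
    · simp [hmax i hgt]
  rw [Finset.sum_eq_single i₀ (fun i _ hi => hterm i hi) (fun h => absurd (mem_univ i₀) h)]
      at hcol
  have hcond : i₀.val ≤ k₀.val ∧ k₀.val ≤ i₀.val + (n - 1) := by omega
  simp only [Pi.smul_apply, smul_eq_mul, tmat', Matrix.of_apply, dif_pos hcond] at hcol
  have hidx : (⟨i₀.val + (n - 1) - k₀.val, by omega⟩ : Fin n) = j₀ := by
    apply Fin.ext
    show i₀.val + (n - 1) - k₀.val = j₀.val
    omega
  rw [hidx] at hcol
  exact mul_ne_zero hci₀ hzj₀ hcol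

lemma tmat_surj (m n : ℕ) (hm : 1 ≤ m) (hn : 1 ≤ n) (z : Fin n → ZMod 2) (hz : z ≠ 0) :
    Function.Surjective (tmat' m n hn z).mulVec := by
  have hli := tmat_rows_li m n hm hn z hz
  have hrank : (tmat' m n hn z).rank = m := by
    rw [LinearIndependent.rank_matrix (M := tmat' m n hn z) hli, Fintype.card_fin]
  have hrange : LinearMap.range (tmat' m n hn z).mulVecLin = ⊤ := by
    apply Submodule.eq_top_of_finrank_eq
    have : Module.finrank (ZMod 2) (LinearMap.range (tmat' m n hn z).mulVecLin)
        = (tmat' m n hn z).rank := rfl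
    rw [this, hrank, Module.finrank_fintype_fun_eq_card, Fintype.card_fin]
  intro v
  have := LinearMap.range_eq_top.mp hrange v
  obtain ⟨t, ht⟩ := this
  exact ⟨t, ht⟩

lemma fiber_card (m n : ℕ) (hm : 1 ≤ m) (hn : 1 ≤ n) (z : Fin n → ZMod 2) (hz : z ≠ 0) :
    (Finset.univ.filter
      (fun t : Fin (m + n - 1) → ZMod 2 => (tmat' m n hn z).mulVec t = 0)).card = 2 ^ (n - 1) := by
  set L := (tmat' m n hn z).mulVec with hL
  have hsurj := tmat_surj m n hm hn z hz
  -- all fibers have the same cardinality as the fiber of 0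
  have hfib : ∀ v : Fin m → ZMod 2,
      (Finset.univ.filter (fun t => L t = v)).card
        = (Finset.univ.filter (fun t => L t = 0)).card := by
    intro v
    obtain ⟨t₀, ht₀⟩ := hsurj v
    apply Finset.card_nbij' (i := fun t => t - t₀) (j := fun t => t + t₀)
    · intro t ht
      simp only [Finset.mem_coe, Finset.mem_filter, Finset.mem_univ, true_and] at ht ⊢
      rw [hL, Matrix.mulVec_sub]
      change L t - L t₀ = 0
      rw [ht, show L t₀ = v from ht₀, sub_self]
    · intro t ht
      simp only [Finset.mem_coe, Finset.mem_filter, Finset.mem_univ, true_and] at ht ⊢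
      rw [hL, Matrix.mulVec_add]
      change L t + L t₀ = v
      rw [ht, show L t₀ = v from ht₀, zero_add]
    · intro t _; simp
    · intro t _; simp
  have hsum : ∑ v : Fin m → ZMod 2, (Finset.univ.filter (fun t => L t = v)).card
      = Fintype.card (Fin (m + n - 1) → ZMod 2) := by
    rw [← Finset.card_univ]
    exact (Finset.card_eq_sum_card_fiberwise (fun t _ => Finset.mem_univ (L t))).symm
  rw [Finset.sum_congr rfl (fun v _ => hfib v)] at hsum
  rw [Finset.sum_const, Finset.card_univ] at hsum
  have hc1 : Fintype.card (Fin m → ZMod 2) = 2 ^ m := by simp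
  have hc2 : Fintype.card (Fin (m + n - 1) → ZMod 2) = 2 ^ (m + n - 1) := by simp
  rw [hc1, hc2, smul_eq_mul] at hsum
  have h2 : (2:ℕ) ^ (m + n - 1) = 2 ^ m * 2 ^ (n - 1) := by
    rw [← pow_add]; congr 1; omega
  rw [h2] at hsum
  exact Nat.eq_of_mul_eq_mul_left (by positivity) hsum

lemma count_single (m n : ℕ) (hm : 1 ≤ m) (hn : 1 ≤ n) (x : Fin n → ZMod 2) :
    (Finset.univ.filter
      (fun p : (Fin (m + n - 1) → ZMod 2) × (Fin m → ZMod 2) =>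
        hashTB m n p.1 p.2 x = 0)).card = 2 ^ (m + n - 1) := by
  have : (Finset.univ.filter
      (fun p : (Fin (m + n - 1) → ZMod 2) × (Fin m → ZMod 2) =>
        hashTB m n p.1 p.2 x = 0)).card
      = (Finset.univ : Finset (Fin (m + n - 1) → ZMod 2)).card := by
    apply Finset.card_nbij' (i := Prod.fst)
      (j := fun t => (t, -(toeplitz m n t).mulVec x))
    · intro p _; exact Finset.mem_univ _
    · intro t _
      simp only [Finset.mem_coe, Finset.mem_filter, Finset.mem_univ, true_and]
      simp only [hashTB]
      rw [add_neg_cancel]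
    · intro p hp
      simp only [Finset.mem_coe, Finset.mem_filter, Finset.mem_univ, true_and] at hp
      simp only [hashTB] at hp
      have : p.2 = -(toeplitz m n p.1).mulVec x := by
        rw [eq_neg_iff_add_eq_zero, add_comm]; exact hp
      exact Prod.ext rfl this.symm
    · intro t _; rfl
  rw [this, Finset.card_univ]
  simp

lemma count_pair (m n : ℕ) (hm : 1 ≤ m) (hn : 1 ≤ n) (x y : Fin n → ZMod 2) (hxy : x ≠ y) :
    (Finset.univ.filter
      (fun p : (Fin (m + n - 1) → ZMod 2) × (Fin m → ZMod 2) =>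
        hashTB m n p.1 p.2 x = 0 ∧ hashTB m n p.1 p.2 y = 0)).card = 2 ^ (n - 1) := by
  have hz : x - y ≠ 0 := sub_ne_zero_of_ne hxy
  have key : (Finset.univ.filter
      (fun p : (Fin (m + n - 1) → ZMod 2) × (Fin m → ZMod 2) =>
        hashTB m n p.1 p.2 x = 0 ∧ hashTB m n p.1 p.2 y = 0)).card
      = (Finset.univ.filter
        (fun t : Fin (m + n - 1) → ZMod 2 => (toeplitz m n t).mulVec (x - y) = 0)).card := by
    apply Finset.card_nbij' (i := Prod.fst)
      (j := fun t => (t, -(toeplitz m n t).mulVec x))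
    · intro p hp
      simp only [Finset.mem_coe, Finset.mem_filter, Finset.mem_univ, true_and] at hp ⊢
      simp only [hashTB] at hp ⊢
      rw [Matrix.mulVec_sub]
      have := sub_eq_zero_of_eq (hp.1.trans hp.2.symm)
      rwa [add_sub_add_right_eq_sub] at this
    · intro t ht
      simp only [Finset.mem_coe, Finset.mem_filter, Finset.mem_univ, true_and] at ht ⊢
      simp only [hashTB] at ht ⊢
      constructor
      · rw [add_neg_cancel]
      · rw [Matrix.mulVec_sub, sub_eq_zero] at ht
        rw [← ht, add_neg_cancel]
    · intro p hp
      simp only [Finset.mem_coe, Finset.mem_filter, Finset.mem_univ, true_and] at hp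
      simp only [hashTB] at hp
      have : p.2 = -(toeplitz m n p.1).mulVec x := by
        rw [eq_neg_iff_add_eq_zero, add_comm]; exact hp.1
      exact Prod.ext rfl this.symm
    · intro t _; rfl
  rw [key, ← fiber_card m n hm hn (x - y) hz]
  apply Finset.card_bij (fun t _ => t)
  · intro t ht
    simp only [Finset.mem_filter, Finset.mem_univ, true_and] at ht ⊢
    rwa [← tmat_mulVec m n hn (x - y) t]
  · intro a b _ _ h; exact h
  · intro t ht
    refine ⟨t, ?_, rfl⟩
    simp only [Finset.mem_filter, Finset.mem_univ, true_and] at ht ⊢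
    rwa [tmat_mulVec m n hn (x - y) t]

private lemma myIteMul (P Q : Prop) [Decidable P] [Decidable Q] :
    (if P then (1:ℝ) else 0) * (if Q then (1:ℝ) else 0) = if P ∧ Q then (1:ℝ) else 0 := by
  split_ifs with h1 h2 h3 h4 h5 <;> simp_all

theorem toeplitz_leftover_hash (m n : ℕ) (hm : 1 ≤ m) (hn : 1 ≤ n)
    (S : Finset (Fin n → ZMod 2)) (hS : S.Nonempty) (ε : ℝ) (hε : 0 < ε) :
    ((Finset.univ.filter
        (fun p : (Fin (m + n - 1) → ZMod 2) × (Fin m → ZMod 2) =>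
          ε * (S.card : ℝ) / 2 ^ m ≤
            |((S.filter (fun x => hashTB m n p.1 p.2 x = 0)).card : ℝ)
              - (S.card : ℝ) / 2 ^ m|)).card : ℝ)
      ≤ (2 ^ m / (ε ^ 2 * (S.card : ℝ))) * 2 ^ (n + 2 * m - 1) ∧
    ((Finset.univ.filter
        (fun p : (Fin (m + n - 1) → ZMod 2) × (Fin m → ZMod 2) =>
          ε * (S.card : ℝ) / 2 ^ m ≤
            |((S.filter (fun x => hashTB m n p.1 p.2 x = 0)).card : ℝ)
              - (S.card : ℝ) / 2 ^ m|)).card : ℝ) / 2 ^ (n + 2 * m - 1)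
      ≤ 2 ^ m / (ε ^ 2 * (S.card : ℝ)) := by
  classical
  set T := (Fin (m + n - 1) → ZMod 2) × (Fin m → ZMod 2) with hT
  set s : ℝ := (S.card : ℝ) with hs_def
  have hs : 0 < s := by
    rw [hs_def]
    exact_mod_cast Finset.card_pos.mpr hS
  set A : ℝ := 2 ^ (m + n - 1) with hA
  set B : ℝ := 2 ^ (n - 1) with hB
  set C : ℝ := 2 ^ m with hC
  have hApos : 0 < A := by positivity
  have hBpos : 0 < B := by positivity
  have hCpos : 0 < C := by positivity
  have hAB : A = B * C := by
    rw [hA, hB, hC, ← pow_add]; congr 1; omega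
  set c : T → ℝ := fun p => ((S.filter (fun x => hashTB m n p.1 p.2 x = 0)).card : ℝ) with hc
  set μ : ℝ := s / C with hμ
  -- expression of c as a sum of indicators
  have hcsum : ∀ p : T, c p = ∑ x ∈ S, (if hashTB m n p.1 p.2 x = 0 then (1:ℝ) else 0) := by
    intro p
    rw [Finset.sum_boole, hc]
  -- first moment
  have sum1 : ∑ p : T, c p = s * A := by
    rw [Finset.sum_congr rfl (fun p _ => hcsum p), Finset.sum_comm]
    have : ∀ x ∈ S, ∑ p : T, (if hashTB m n p.1 p.2 x = 0 then (1:ℝ) else 0) = A := by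
      intro x _
      rw [Finset.sum_boole, hA]
      exact_mod_cast congrArg (Nat.cast (R := ℝ)) (count_single m n hm hn x)
    rw [Finset.sum_congr rfl this, Finset.sum_const, nsmul_eq_mul, hs_def]
  -- second moment
  have sum2 : ∑ p : T, (c p) ^ 2 = s * A + (s ^ 2 - s) * B := by
    have expand : ∀ p : T, (c p) ^ 2 = ∑ x ∈ S, ∑ y ∈ S,
        (if hashTB m n p.1 p.2 x = 0 ∧ hashTB m n p.1 p.2 y = 0 then (1:ℝ) else 0) := by
      intro p
      rw [sq, hcsum p, Finset.sum_mul_sum]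
      exact Finset.sum_congr rfl fun x _ => Finset.sum_congr rfl fun y _ => myIteMul _ _
    rw [Finset.sum_congr rfl (fun p _ => expand p), Finset.sum_comm]
    have inner : ∀ x ∈ S, ∑ p : T, ∑ y ∈ S,
        (if hashTB m n p.1 p.2 x = 0 ∧ hashTB m n p.1 p.2 y = 0 then (1:ℝ) else 0)
        = s * B + (A - B) := by
      intro x hx
      rw [Finset.sum_comm]
      have swap : ∀ y ∈ S, ∑ p : T,
          (if hashTB m n p.1 p.2 x = 0 ∧ hashTB m n p.1 p.2 y = 0 then (1:ℝ) else 0)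
          = if x = y then A else B := by
        intro y _
        rw [Finset.sum_boole]
        by_cases hxy : x = y
        · subst hxy
          rw [if_pos rfl, hA]
          have : (Finset.univ.filter
              (fun p : T => hashTB m n p.1 p.2 x = 0 ∧ hashTB m n p.1 p.2 x = 0)).card
              = 2 ^ (m + n - 1) := by
            rw [← count_single m n hm hn x]
            congr 1
            apply Finset.filter_congr
            intro p _
            simp [and_self]
          exact_mod_cast congrArg (Nat.cast (R := ℝ)) this
        · rw [if_neg hxy, hB]
          exact_mod_cast congrArg (Nat.cast (R := ℝ)) (count_pair m n hm hn x y hxy)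
      rw [Finset.sum_congr rfl swap]
      have split : ∀ y ∈ S, (if x = y then A else B)
          = B + (if x = y then A - B else 0) := by
        intro y _
        by_cases h : x = y <;> simp [h]
      rw [Finset.sum_congr rfl split, Finset.sum_add_distrib, Finset.sum_const,
        nsmul_eq_mul, Finset.sum_ite_eq S x (fun _ => A - B), if_pos hx, hs_def]
      
    rw [Finset.sum_congr rfl inner, Finset.sum_const, nsmul_eq_mul, hs_def]
    ring
  -- number of pairs
  have hcardT : ((Fintype.card T : ℝ)) = A * C := by
    have h1 : Fintype.card T = 2 ^ (m + n - 1) * 2 ^ m := by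
      show Fintype.card ((Fin (m + n - 1) → ZMod 2) × (Fin m → ZMod 2)) = _
      simp
    rw [h1, hA, hC]
    push_cast
    ring
  -- variance
  have var : ∑ p : T, (c p - μ) ^ 2 = s * A - s * B := by
    have expand : ∀ p : T, (c p - μ) ^ 2 = (c p) ^ 2 - 2 * μ * c p + μ ^ 2 := by
      intro p; ring
    rw [Finset.sum_congr rfl (fun p _ => expand p)]
    rw [Finset.sum_add_distrib]
    rw [Finset.sum_sub_distrib]
    rw [← Finset.mul_sum, sum1, sum2]
    rw [Finset.sum_const]
    rw [Finset.card_univ]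
    rw [nsmul_eq_mul]
    rw [hcardT, hμ, hAB]
    field_simp
    ring
  set F := (Finset.univ.filter
      (fun p : T =>
        ε * s / C ≤
          |((S.filter (fun x => hashTB m n p.1 p.2 x = 0)).card : ℝ) - μ|)) with hF
  have hterm : ∀ p ∈ F, (ε * s / C) ^ 2 ≤ (c p - μ) ^ 2 := by
    intro p hp
    rw [hF, Finset.mem_filter] at hp
    have h0 : 0 ≤ ε * s / C := by positivity
    calc (ε * s / C) ^ 2 ≤ |c p - μ| ^ 2 := by
          apply pow_le_pow_left₀ h0
          exact hp.2
      _ = (c p - μ) ^ 2 := sq_abs _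
  have cheb : (F.card : ℝ) * (ε * s / C) ^ 2 ≤ s * A := by
    have h2 : (F.card : ℝ) * (ε * s / C) ^ 2 ≤ ∑ p ∈ F, (c p - μ) ^ 2 := by
      calc (F.card : ℝ) * (ε * s / C) ^ 2 = ∑ _p ∈ F, (ε * s / C) ^ 2 := by
            rw [Finset.sum_const, nsmul_eq_mul]
        _ ≤ ∑ p ∈ F, (c p - μ) ^ 2 := Finset.sum_le_sum hterm
    have h3 : ∑ p ∈ F, (c p - μ) ^ 2 ≤ ∑ p : T, (c p - μ) ^ 2 :=
      Finset.sum_le_sum_of_subset_of_nonneg (Finset.subset_univ F)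
        (fun p _ _ => sq_nonneg _)
    have h4 : ∑ p : T, (c p - μ) ^ 2 ≤ s * A := by
      rw [var]
      nlinarith [mul_pos hs hBpos]
    linarith
  have hpow : (2:ℝ) ^ (n + 2 * m - 1) = A * C := by
    rw [hA, hC, ← pow_add]; congr 1; omega
  have goal1 : (F.card : ℝ) ≤ C / (ε ^ 2 * s) * 2 ^ (n + 2 * m - 1) := by
    rw [hpow, div_mul_eq_mul_div, le_div_iff₀ (by positivity : (0:ℝ) < ε ^ 2 * s)]
    have h2 : (F.card : ℝ) * ε ^ 2 * s ^ 2 ≤ s * A * C ^ 2 := by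
      calc (F.card : ℝ) * ε ^ 2 * s ^ 2 = (F.card : ℝ) * (ε * s / C) ^ 2 * C ^ 2 := by
            field_simp
        _ ≤ s * A * C ^ 2 := by
            apply mul_le_mul_of_nonneg_right cheb
            positivity
    refine le_of_mul_le_mul_right ?_ hs
    calc (F.card : ℝ) * (ε ^ 2 * s) * s = (F.card : ℝ) * ε ^ 2 * s ^ 2 := by ring
      _ ≤ s * A * C ^ 2 := h2
      _ = C * (A * C) * s := by ring
  refine ⟨goal1, ?_⟩
  rw [div_le_div_iff₀ (by positivity) (by positivity : (0:ℝ) < ε ^ 2 * s), hpow]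
  rw [hpow, div_mul_eq_mul_div, le_div_iff₀ (by positivity : (0:ℝ) < ε ^ 2 * s)] at goal1
  linarith [goal1]
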